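/- For x > 0 and nonnegative integer n, ∫_0^∞ z^n e^{-xz} ln(1+z) dz = n! e^x Σ_{ℓ=1}^{n+1} Γ(ℓ - n - 1, x) / x^ℓ, where Γ(a,x) is the upper incomplete gamma function. -/

import Mathlib

open MeasureTheory Set Real Filter

lemma tendsto_pow_exp (k : ℕ) {c : ℝ} (hc : 0 < c) :
    Tendsto (fun z : ℝ => z ^ k * Real.exp (-c * z)) atTop (nhds 0) := by
  refine (tendsto_rpow_mul_exp_neg_mul_atTop_nhds_zero k c hc).congr' ?_
  filter_upwards [eventually_gt_atTop (0:ℝ)] with z hz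
  rw [Real.rpow_natCast]

lemma integrableOn_aux {c : ℝ} (hc : 0 < c) (n : ℕ) {g : ℝ → ℝ}
    (hgc : ContinuousOn g (Ici 0)) (hg : ∀ z ≥ (0:ℝ), |g z| ≤ 1 + z) :
    IntegrableOn (fun z : ℝ => z ^ n * Real.exp (-c * z) * g z) (Ioi 0) := by
  apply integrable_of_isBigO_exp_neg (half_pos hc)
  · exact (((continuous_pow n).continuousOn).mul (Real.continuous_exp.comp
      (continuous_const.mul continuous_id)).continuousOn).mul hgc
  · rw [Asymptotics.isBigO_iff]
    refine ⟨1, ?_⟩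
    have h1 : Tendsto (fun z : ℝ => z ^ n * Real.exp (-(c/2) * z) + z ^ (n+1) * Real.exp (-(c/2) * z)) atTop (nhds 0) := by
      simpa using (tendsto_pow_exp n (half_pos hc)).add (tendsto_pow_exp (n+1) (half_pos hc))
    filter_upwards [eventually_ge_atTop (0:ℝ), h1.eventually (eventually_le_nhds (by norm_num : (0:ℝ) < 1))] with z hz h2
    have e1 : Real.exp (-c * z) = Real.exp (-(c/2) * z) * Real.exp (-(c/2) * z) := by
      rw [← Real.exp_add]; ring_nf
    have hzn : (0:ℝ) ≤ z ^ n := pow_nonneg hz n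
    calc |z ^ n * Real.exp (-c * z) * g z|
        = z ^ n * Real.exp (-c * z) * |g z| := by
          rw [abs_mul, abs_of_nonneg (by positivity)]
      _ ≤ z ^ n * Real.exp (-c * z) * (1 + z) := by
          apply mul_le_mul_of_nonneg_left (hg z hz) (by positivity)
      _ = (z ^ n * Real.exp (-(c/2) * z) + z ^ (n+1) * Real.exp (-(c/2) * z)) * Real.exp (-(c/2) * z) := by
          rw [e1]; ring
      _ ≤ 1 * Real.exp (-(c/2) * z) := by
          apply mul_le_mul_of_nonneg_right h2 (Real.exp_pos _).le
      _ ≤ 1 * |Real.exp (-(c/2) * z)| := by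
          rw [abs_of_pos (Real.exp_pos _)]

lemma integrableOn_rpow_exp {x : ℝ} (hx : 0 < x) (a : ℝ) :
    IntegrableOn (fun t : ℝ => t ^ a * Real.exp (-t)) (Ioi x) := by
  apply integrable_of_isBigO_exp_neg (b := 1/2) (by norm_num)
  · intro t ht
    have ht0 : t ≠ 0 := by have := lt_of_lt_of_le hx ht; positivity
    exact ((Real.continuousAt_rpow_const t a (Or.inl ht0)).mul
      (Real.continuous_exp.comp continuous_neg).continuousAt).continuousWithinAt
  · rw [Asymptotics.isBigO_iff]
    refine ⟨1, ?_⟩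
    have h1 := tendsto_rpow_mul_exp_neg_mul_atTop_nhds_zero a (1/2) (by norm_num)
    filter_upwards [eventually_gt_atTop (0:ℝ),
      h1.eventually (eventually_le_nhds (by norm_num : (0:ℝ) < 1))] with t ht h2
    have e1 : Real.exp (-t) = Real.exp (-(1/2) * t) * Real.exp (-(1/2) * t) := by
      rw [← Real.exp_add]; ring_nf
    have h3 : (0:ℝ) ≤ t ^ a := Real.rpow_nonneg ht.le a
    calc |t ^ a * Real.exp (-t)| = t ^ a * Real.exp (-t) := abs_of_nonneg (by positivity)
      _ = (t ^ a * Real.exp (-(1/2) * t)) * Real.exp (-(1/2) * t) := by rw [e1]; ring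
      _ ≤ 1 * Real.exp (-(1/2) * t) := mul_le_mul_of_nonneg_right h2 (Real.exp_pos _).le
      _ ≤ 1 * |Real.exp (-(1/2) * t)| := by rw [abs_of_pos (Real.exp_pos _)]

lemma moment_eq {x : ℝ} (hx : 0 < x) (n : ℕ) :
    (∫ z in Ioi (0:ℝ), z ^ n * Real.exp (-x * z)) = (Nat.factorial n : ℝ) / x ^ (n+1) := by
  have h := Real.integral_rpow_mul_exp_neg_mul_Ioi (a := (n:ℝ)+1) (r := x) (by positivity) hx
  have h2 : (∫ z in Ioi (0:ℝ), z ^ n * Real.exp (-x * z))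
      = ∫ t in Ioi (0:ℝ), t ^ ((n:ℝ) + 1 - 1) * Real.exp (-(x * t)) := by
    refine setIntegral_congr_fun measurableSet_Ioi (fun z hz => ?_)
    rw [add_sub_cancel_right, Real.rpow_natCast, neg_mul]
  rw [h2, h]
  rw [Real.Gamma_nat_eq_factorial, show ((n:ℝ) + 1) = ((n+1 : ℕ) : ℝ) by push_cast; ring,
    Real.rpow_natCast]
  field_simp
  rw [← mul_pow]; simp [hx.ne']



/-- The upper incomplete gamma function `Γ(a,x) = ∫_x^∞ t^{a-1} e^{-t} dt`. -/
noncomputable def upperIncGamma (a x : ℝ) : ℝ :=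
  ∫ t in Set.Ioi x, t ^ (a - 1) * Real.exp (-t)


lemma gamma_rec {x : ℝ} (hx : 0 < x) (a : ℝ) :
    upperIncGamma (a + 1) x = a * upperIncGamma a x + x ^ a * Real.exp (-x) := by
  have hderiv : ∀ t ∈ Ici x, HasDerivAt (fun t : ℝ => -(t ^ a * Real.exp (-t)))
      (t ^ a * Real.exp (-t) - a * (t ^ (a-1) * Real.exp (-t))) t := by
    intro t ht
    have ht0 : t ≠ 0 := (lt_of_lt_of_le hx ht).ne'
    have h1 : HasDerivAt (fun t : ℝ => t ^ a) (a * t ^ (a-1)) t :=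
      Real.hasDerivAt_rpow_const (Or.inl ht0)
    have h2 : HasDerivAt (fun t : ℝ => Real.exp (-t)) (-Real.exp (-t)) t := by
      simpa [Function.comp_def] using ((Real.hasDerivAt_exp (-t)).comp t (hasDerivAt_neg t))
    have := (h1.mul h2).neg
    exact this.congr_deriv (by ring)
  have hint : IntegrableOn (fun t : ℝ => t ^ a * Real.exp (-t) - a * (t ^ (a-1) * Real.exp (-t))) (Ioi x) :=
    (integrableOn_rpow_exp hx a).sub ((integrableOn_rpow_exp hx (a-1)).const_mul a)
  have htend : Tendsto (fun t : ℝ => -(t ^ a * Real.exp (-t))) atTop (nhds 0) := by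
    have := (tendsto_rpow_mul_exp_neg_mul_atTop_nhds_zero a 1 one_pos).neg
    simp only [neg_zero] at this
    refine this.congr' ?_
    filter_upwards [eventually_gt_atTop (0:ℝ)] with t _
    rw [neg_mul, one_mul]
  have key := integral_Ioi_of_hasDerivAt_of_tendsto' hderiv hint htend
  rw [integral_sub (integrableOn_rpow_exp hx a) ((integrableOn_rpow_exp hx (a-1)).const_mul a),
    integral_const_mul] at key
  have e1 : upperIncGamma (a+1) x = ∫ t in Ioi x, t ^ a * Real.exp (-t) := by
    unfold upperIncGamma; rw [show a + 1 - 1 = a by ring]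
  have e2 : upperIncGamma a x = ∫ t in Ioi x, t ^ (a-1) * Real.exp (-t) := rfl
  rw [e1, e2]
  linarith [key]

noncomputable def Asum (x : ℝ) (k : ℕ) : ℝ :=
  ∑ j ∈ Finset.Icc 1 k, (-1:ℝ)^(j-1) * (Nat.factorial (j-1)) / x ^ j

lemma gamma_neg_nat {x : ℝ} (hx : 0 < x) (k : ℕ) :
    upperIncGamma (-(k:ℝ)) x
      = (-1:ℝ)^k / (Nat.factorial k) * (upperIncGamma 0 x - Real.exp (-x) * Asum x k) := by
  induction k with
  | zero => simp [Asum]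
  | succ k ih =>
    have h := gamma_rec hx (-(k:ℝ) - 1)
    rw [show -(k:ℝ) - 1 + 1 = -(k:ℝ) by ring] at h
    rw [ih] at h
    rw [show (-(((k+1):ℕ):ℝ)) = -(k:ℝ) - 1 by push_cast; ring]
    -- h : (-1)^k/k! * (U - e^{-x} A k) = (-(k:ℝ)-1) * Γ(-(k+1)) + x^(-(k:ℝ)-1) * exp(-x)
    have hxpow : x ^ (-(k:ℝ) - 1) = 1 / x ^ (k+1) := by
      rw [show -(k:ℝ) - 1 = -(((k+1:ℕ):ℝ)) by push_cast; ring, Real.rpow_neg hx.le,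
        Real.rpow_natCast, one_div]
    have hA : Asum x (k+1) = Asum x k + (-1:ℝ)^k * (Nat.factorial k) / x ^ (k+1) := by
      unfold Asum
      rw [Finset.sum_Icc_succ_top (by omega : 1 ≤ k+1)]
      simp
    have hk1 : ((k:ℝ) + 1) ≠ 0 := by positivity
    have hfac : ((Nat.factorial (k+1) : ℝ)) = ((k:ℝ)+1) * (Nat.factorial k) := by
      rw [Nat.factorial_succ]; push_cast; ring
    have hfk : ((Nat.factorial k : ℝ)) ≠ 0 := by positivity
    have hxk : (x:ℝ) ^ (k+1) ≠ 0 := by positivity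
    rw [hxpow] at h
    rw [hA, hfac]
    field_simp at h ⊢
    ring_nf at h ⊢
    rw [show ((-1:ℝ))^(k*2) = 1 by rw [mul_comm, pow_mul]; norm_num]
    ring_nf
    linarith [h]

lemma contOn_log : ContinuousOn (fun z : ℝ => Real.log (1 + z)) (Ici 0) := by
  intro z hz
  have hz0 : (0:ℝ) ≤ z := hz
  have h1 : (1:ℝ) + z ≠ 0 := by positivity
  exact ((Real.continuousAt_log h1).comp (by fun_prop : ContinuousAt (fun z : ℝ => 1 + z) z)).continuousWithinAt

lemma contOn_inv : ContinuousOn (fun z : ℝ => (1 + z)⁻¹) (Ici 0) := by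
  intro z hz
  have hz0 : (0:ℝ) ≤ z := hz
  have h1 : (1:ℝ) + z ≠ 0 := by positivity
  exact ((continuousAt_inv₀ h1).comp (by fun_prop : ContinuousAt (fun z : ℝ => 1 + z) z)).continuousWithinAt

lemma intOn_log {x : ℝ} (hx : 0 < x) (n : ℕ) :
    IntegrableOn (fun z : ℝ => z ^ n * Real.exp (-x * z) * Real.log (1 + z)) (Ioi 0) := by
  refine integrableOn_aux hx n contOn_log (fun z hz => ?_)
  have h1 : (0:ℝ) < 1 + z := by positivity
  rw [abs_of_nonneg (Real.log_nonneg (by linarith))]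
  have := Real.log_le_sub_one_of_pos h1
  linarith

lemma intOn_inv {x : ℝ} (hx : 0 < x) (n : ℕ) :
    IntegrableOn (fun z : ℝ => z ^ n * Real.exp (-x * z) * (1 + z)⁻¹) (Ioi 0) := by
  refine integrableOn_aux hx n contOn_inv (fun z hz => ?_)
  have h1 : (0:ℝ) < 1 + z := by positivity
  have h2 : (1 + z)⁻¹ * (1 + z) = 1 := inv_mul_cancel₀ h1.ne'
  rw [abs_of_nonneg (by positivity)]
  nlinarith [h2, h1, hz]

lemma hasDeriv_f {x : ℝ} (n : ℕ) {z : ℝ} (hz : z ∈ Ici (0:ℝ)) :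
    HasDerivAt (fun z : ℝ => z ^ (n+1) * Real.exp (-x*z) * Real.log (1+z))
      (((n:ℝ)+1) * (z ^ n * Real.exp (-x*z) * Real.log (1+z))
        - x * (z ^ (n+1) * Real.exp (-x*z) * Real.log (1+z))
        + z ^ (n+1) * Real.exp (-x*z) * (1+z)⁻¹) z := by
  have hz0 : (0:ℝ) ≤ z := hz
  have h1 : (1:ℝ) + z ≠ 0 := by positivity
  have hp : HasDerivAt (fun z : ℝ => z ^ (n+1)) (((n:ℝ)+1) * z ^ n) z := by
    simpa using hasDerivAt_pow (n+1) z
  have he : HasDerivAt (fun z : ℝ => Real.exp (-x*z)) (Real.exp (-x*z) * (-x)) z :=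
    (Real.hasDerivAt_exp (-x*z)).comp z (by simpa only [mul_one, id] using (hasDerivAt_id z).const_mul (-x))
  have hl : HasDerivAt (fun z : ℝ => Real.log (1+z)) ((1+z)⁻¹ * 1) z :=
    (Real.hasDerivAt_log h1).comp z (by simpa using (hasDerivAt_id z).const_add 1)
  have := (hp.mul he).mul hl
  exact this.congr_deriv (by simp only [Pi.mul_apply]; ring)

lemma tendsto_f {x : ℝ} (hx : 0 < x) (m : ℕ) :
    Tendsto (fun z : ℝ => z ^ m * Real.exp (-x*z) * Real.log (1+z)) atTop (nhds 0) := by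
  apply tendsto_of_tendsto_of_tendsto_of_le_of_le' tendsto_const_nhds (tendsto_pow_exp (m+1) hx)
  · filter_upwards [eventually_ge_atTop (0:ℝ)] with z hz
    have h1 : (0:ℝ) < 1 + z := by positivity
    exact mul_nonneg (by positivity) (Real.log_nonneg (by linarith))
  · filter_upwards [eventually_ge_atTop (0:ℝ)] with z hz
    have h1 : (0:ℝ) < 1 + z := by positivity
    have h2 : Real.log (1+z) ≤ z := by
      have := Real.log_le_sub_one_of_pos h1; linarith
    calc z ^ m * Real.exp (-x*z) * Real.log (1+z) ≤ z ^ m * Real.exp (-x*z) * z :=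
          mul_le_mul_of_nonneg_left h2 (by positivity)
      _ = z ^ (m+1) * Real.exp (-x*z) := by ring

noncomputable def Ii (x : ℝ) (n : ℕ) : ℝ :=
  ∫ z in Ioi (0:ℝ), z ^ n * Real.exp (-x*z) * Real.log (1+z)

noncomputable def Kk (x : ℝ) (m : ℕ) : ℝ :=
  ∫ z in Ioi (0:ℝ), z ^ m * Real.exp (-x*z) * (1+z)⁻¹

lemma I_rec {x : ℝ} (hx : 0 < x) (n : ℕ) :
    x * Ii x (n+1) = ((n:ℝ)+1) * Ii x n + Kk x (n+1) := by
  have hA := (intOn_log hx n).const_mul ((n:ℝ)+1)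
  have hB := (intOn_log hx (n+1)).const_mul x
  have hC := intOn_inv hx (n+1)
  have hAB : IntegrableOn (fun z : ℝ =>
      ((n:ℝ)+1) * (z ^ n * Real.exp (-x*z) * Real.log (1+z))
        - x * (z ^ (n+1) * Real.exp (-x*z) * Real.log (1+z))) (Ioi 0) := by exact hA.sub hB
  have hint : IntegrableOn (fun z : ℝ =>
      ((n:ℝ)+1) * (z ^ n * Real.exp (-x*z) * Real.log (1+z))
        - x * (z ^ (n+1) * Real.exp (-x*z) * Real.log (1+z))
        + z ^ (n+1) * Real.exp (-x*z) * (1+z)⁻¹) (Ioi 0) := by exact hAB.add hC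
  have key := integral_Ioi_of_hasDerivAt_of_tendsto' (a := (0:ℝ))
    (fun z hz => hasDeriv_f n hz) hint (tendsto_f hx (n+1))
  rw [integral_add hAB hC, integral_sub hA hB, integral_const_mul, integral_const_mul] at key
  simp only [zero_pow (Nat.succ_ne_zero n), zero_mul, add_zero, Real.log_one, mul_zero, sub_zero] at key
  unfold Ii Kk
  linarith [key]

lemma I0_rec {x : ℝ} (hx : 0 < x) : x * Ii x 0 = Kk x 0 := by
  have hA := ((intOn_log hx 0).const_mul x).const_mul (-1:ℝ)
  have hC := intOn_inv hx 0
  have hint : IntegrableOn (fun z : ℝ =>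
      ((-1:ℝ)) * (x * (z ^ 0 * Real.exp (-x*z) * Real.log (1+z)))
        + z ^ 0 * Real.exp (-x*z) * (1+z)⁻¹) (Ioi 0) := by exact hA.add hC
  have hderiv : ∀ z ∈ Ici (0:ℝ), HasDerivAt (fun z : ℝ => Real.exp (-x*z) * Real.log (1+z))
      ((-1:ℝ) * (x * (z ^ 0 * Real.exp (-x*z) * Real.log (1+z)))
        + z ^ 0 * Real.exp (-x*z) * (1+z)⁻¹) z := by
    intro z hz
    have hz0 : (0:ℝ) ≤ z := hz
    have h1 : (1:ℝ) + z ≠ 0 := by positivity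
    have he : HasDerivAt (fun z : ℝ => Real.exp (-x*z)) (Real.exp (-x*z) * (-x)) z :=
      (Real.hasDerivAt_exp (-x*z)).comp z (by simpa only [mul_one, id] using (hasDerivAt_id z).const_mul (-x))
    have hl : HasDerivAt (fun z : ℝ => Real.log (1+z)) ((1+z)⁻¹ * 1) z :=
      (Real.hasDerivAt_log h1).comp z (by simpa using (hasDerivAt_id z).const_add 1)
    have := he.mul hl
    exact this.congr_deriv (by simp only [pow_zero, one_mul]; ring)
  have htend : Tendsto (fun z : ℝ => Real.exp (-x*z) * Real.log (1+z)) atTop (nhds 0) := by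
    have := tendsto_f hx 0
    simpa only [pow_zero, one_mul] using this
  have key := integral_Ioi_of_hasDerivAt_of_tendsto' (a := (0:ℝ)) hderiv hint htend
  rw [integral_add hA hC, integral_const_mul, integral_const_mul] at key
  simp only [mul_zero, add_zero, Real.log_one, Real.exp_zero, zero_mul, sub_zero, one_mul, mul_one] at key
  unfold Ii Kk
  linarith [key]

lemma integral_Ioi_add (g : ℝ → ℝ) (a d : ℝ) :
    (∫ u in Ioi a, g (u + d)) = ∫ t in Ioi (a + d), g t := by
  rw [← integral_indicator measurableSet_Ioi, ← integral_indicator measurableSet_Ioi,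
    ← integral_add_right_eq_self (Set.indicator (Ioi (a+d)) g) d]
  congr 1
  ext u
  by_cases h : u ∈ Ioi a
  · rw [Set.indicator_of_mem h, Set.indicator_of_mem]
    rw [mem_Ioi] at h ⊢; linarith
  · rw [Set.indicator_of_notMem h, Set.indicator_of_notMem]
    rw [mem_Ioi] at h ⊢; intro hc; exact h (by linarith)

lemma K0 {x : ℝ} (hx : 0 < x) : Kk x 0 = Real.exp x * upperIncGamma 0 x := by
  have hcongr : ∀ z ∈ Ioi (0:ℝ), z ^ 0 * Real.exp (-x*z) * (1+z)⁻¹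
      = (Real.exp x * x) * ((x * z + x) ^ ((0:ℝ)-1) * Real.exp (-(x * z + x))) := by
    intro z hz
    rw [mem_Ioi] at hz
    have h1 : (0:ℝ) < x * z + x := by positivity
    rw [show ((0:ℝ)-1) = -1 by ring, Real.rpow_neg_one]
    have hexp : Real.exp x * Real.exp (-x) = 1 := by rw [← Real.exp_add]; simp
    rw [pow_zero, one_mul, show -(x*z+x) = -x*z + (-x) by ring, Real.exp_add]
    field_simp
    linear_combination (-(1+z)) * hexp
  unfold Kk
  rw [setIntegral_congr_fun measurableSet_Ioi hcongr, integral_const_mul]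
  have h2 := integral_comp_mul_left_Ioi
    (fun u : ℝ => (u + x) ^ ((0:ℝ)-1) * Real.exp (-(u + x))) 0 hx
  simp only [mul_zero] at h2
  rw [h2, integral_Ioi_add (fun t : ℝ => t ^ ((0:ℝ)-1) * Real.exp (-t)) 0 x, zero_add]
  unfold upperIncGamma
  rw [smul_eq_mul]
  field_simp


lemma intOn_one {x : ℝ} (hx : 0 < x) (n : ℕ) :
    IntegrableOn (fun z : ℝ => z ^ n * Real.exp (-x * z)) (Ioi 0) := by
  have h := integrableOn_aux (g := fun _ => (1:ℝ)) hx n continuousOn_const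
    (fun z hz => by rw [abs_one]; linarith)
  simpa using h

noncomputable def Tt (x : ℝ) (m : ℕ) : ℝ :=
  (-1:ℝ)^m * Real.exp x * upperIncGamma 0 x
    + ∑ j ∈ Finset.Icc 1 m, (-1:ℝ)^(m-j) * (Nat.factorial (j-1)) / x ^ j

lemma K_rec {x : ℝ} (hx : 0 < x) (m : ℕ) :
    Kk x (m+1) = (Nat.factorial m : ℝ) / x ^ (m+1) - Kk x m := by
  have hcongr : ∀ z ∈ Ioi (0:ℝ), z ^ (m+1) * Real.exp (-x*z) * (1+z)⁻¹
      = z ^ m * Real.exp (-x*z) - z ^ m * Real.exp (-x*z) * (1+z)⁻¹ := by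
    intro z hz
    rw [mem_Ioi] at hz
    have h1 : (1:ℝ) + z ≠ 0 := by positivity
    field_simp
    ring
  have hM : IntegrableOn (fun z : ℝ => z ^ m * Real.exp (-x*z)) (Ioi 0) := intOn_one hx m
  unfold Kk
  rw [setIntegral_congr_fun measurableSet_Ioi hcongr,
    integral_sub hM (intOn_inv hx m), moment_eq hx m]

lemma K_eq {x : ℝ} (hx : 0 < x) (m : ℕ) : Kk x m = Tt x m := by
  induction m with
  | zero => simp [Tt, K0 hx]
  | succ m ih =>
    rw [K_rec hx m, ih]
    unfold Tt
    rw [Finset.sum_Icc_succ_top (by omega : 1 ≤ m+1)]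
    have hsum : ∀ j ∈ Finset.Icc 1 m, (-1:ℝ)^(m+1-j) * (Nat.factorial (j-1)) / x ^ j
        = -((-1:ℝ)^(m-j) * (Nat.factorial (j-1)) / x ^ j) := by
      intro j hj
      rw [Finset.mem_Icc] at hj
      rw [show m+1-j = (m-j)+1 by omega, pow_succ]
      ring
    rw [Finset.sum_congr rfl hsum, Finset.sum_neg_distrib]
    simp only [Nat.sub_self, pow_zero, one_mul, Nat.add_sub_cancel]
    have hx0 : x ≠ 0 := hx.ne'
    field_simp
    ring

noncomputable def Ss (x : ℝ) (n : ℕ) : ℝ :=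
  (Nat.factorial n : ℝ) * Real.exp x *
    ∑ k ∈ Finset.range (n+1), upperIncGamma (-(k:ℝ)) x / x ^ (n+1-k)

lemma gamma_top {x : ℝ} (hx : 0 < x) (n : ℕ) :
    ((Nat.factorial (n+1) : ℝ)) * Real.exp x * upperIncGamma (-((n:ℝ)+1)) x = Tt x (n+1) := by
  have h := gamma_neg_nat hx (n+1)
  rw [show -(((n+1:ℕ)):ℝ) = -((n:ℝ)+1) by push_cast; ring] at h
  rw [h]
  unfold Tt Asum
  have hfac : ((Nat.factorial (n+1) : ℝ)) ≠ 0 := by positivity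
  have hexp : Real.exp x * Real.exp (-x) = 1 := by rw [← Real.exp_add]; simp
  have hsum : ∀ j ∈ Finset.Icc 1 (n+1), (-1:ℝ)^(n+1-j) * (Nat.factorial (j-1)) / x ^ j
      = (-(-1:ℝ)^(n+1)) * ((-1:ℝ)^(j-1) * (Nat.factorial (j-1)) / x ^ j) := by
    intro j hj
    rw [Finset.mem_Icc] at hj
    have h1 : (-1:ℝ)^(n+1-j) * (-1:ℝ)^j = (-1:ℝ)^(n+1) := by
      rw [← pow_add]; congr 1; omega
    have h2 : (-1:ℝ)^(j-1) * (-1:ℝ) = (-1:ℝ)^j := by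
      rw [← pow_succ]; congr 1; omega
    have h3 : (-1:ℝ)^j * (-1:ℝ)^j = 1 := by
      rw [← pow_add]; exact Even.neg_one_pow ⟨j, rfl⟩
    have h4 : (-1:ℝ)^(n+1-j) = (-(-1:ℝ)^(n+1)) * (-1:ℝ)^(j-1) := by
      calc (-1:ℝ)^(n+1-j) = (-1:ℝ)^(n+1-j) * ((-1:ℝ)^j * (-1:ℝ)^j) := by rw [h3, mul_one]
        _ = ((-1:ℝ)^(n+1-j) * (-1:ℝ)^j) * (-1:ℝ)^j := by ring
        _ = (-1:ℝ)^(n+1) * (-1:ℝ)^j := by rw [h1]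
        _ = (-1:ℝ)^(n+1) * ((-1:ℝ)^(j-1) * (-1:ℝ)) := by rw [h2]
        _ = (-(-1:ℝ)^(n+1)) * (-1:ℝ)^(j-1) := by ring
    rw [h4]; ring
  rw [Finset.sum_congr rfl hsum, ← Finset.mul_sum]
  field_simp
  linear_combination (-((1:ℝ) *
    (∑ j ∈ Finset.Icc 1 (n+1), (-1:ℝ)^(j-1) * ((Nat.factorial (j-1):ℝ)) / x ^ j))) * hexp

lemma S_alg {x : ℝ} (hx : 0 < x) (n : ℕ) :
    x * Ss x (n+1) = ((n:ℝ)+1) * Ss x n + Tt x (n+1) := by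
  have hx0 : x ≠ 0 := hx.ne'
  have hfac : ((Nat.factorial (n+1) : ℝ)) = ((n:ℝ)+1) * (Nat.factorial n) := by
    rw [Nat.factorial_succ]; push_cast; ring
  have key1 : x * ∑ k ∈ Finset.range (n+1+1), upperIncGamma (-(k:ℝ)) x / x ^ (n+1+1-k)
      = ∑ k ∈ Finset.range (n+1+1), upperIncGamma (-(k:ℝ)) x / x ^ (n+1-k) := by
    rw [Finset.mul_sum]
    refine Finset.sum_congr rfl (fun k hk => ?_)
    rw [Finset.mem_range] at hk
    rw [show n+1+1-k = (n+1-k)+1 by omega, pow_succ]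
    field_simp
  have e2 : ∑ k ∈ Finset.range (n+1+1), upperIncGamma (-(k:ℝ)) x / x ^ (n+1-k)
      = (∑ k ∈ Finset.range (n+1), upperIncGamma (-(k:ℝ)) x / x ^ (n+1-k))
        + upperIncGamma (-((n:ℝ)+1)) x := by
    rw [Finset.sum_range_succ, Nat.sub_self, pow_zero, div_one]
    norm_num
  unfold Ss
  rw [← gamma_top hx n, hfac]
  linear_combination (((n:ℝ)+1) * (Nat.factorial n : ℝ) * Real.exp x) * key1
    + (((n:ℝ)+1) * (Nat.factorial n : ℝ) * Real.exp x) * e2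

lemma I_eq_S {x : ℝ} (hx : 0 < x) (n : ℕ) : Ii x n = Ss x n := by
  have hx0 : x ≠ 0 := hx.ne'
  induction n with
  | zero =>
    have h := I0_rec hx
    rw [K0 hx] at h
    have h2 : x * Ss x 0 = Real.exp x * upperIncGamma 0 x := by
      unfold Ss
      rw [Finset.sum_range_one]
      norm_num
      field_simp
    exact mul_left_cancel₀ hx0 (h.trans h2.symm)
  | succ n ih =>
    have h := I_rec hx n
    rw [ih, K_eq hx (n+1), ← S_alg hx n] at h
    exact mul_left_cancel₀ hx0 h

lemma reindex (x : ℝ) (n : ℕ) :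
    ∑ ℓ ∈ Finset.Icc 1 (n+1), upperIncGamma ((ℓ:ℝ) - n - 1) x / x ^ ℓ
      = ∑ k ∈ Finset.range (n+1), upperIncGamma (-(k:ℝ)) x / x ^ (n+1-k) := by
  refine Finset.sum_nbij' (i := fun ℓ => n+1-ℓ) (j := fun k => n+1-k) ?_ ?_ ?_ ?_ ?_
  · intro a ha; simp only [Finset.mem_Icc] at ha; simp only [Finset.mem_range]; omega
  · intro a ha; simp only [Finset.mem_range] at ha; simp only [Finset.mem_Icc]; omega
  · intro a ha; rw [Finset.mem_Icc] at ha; show n+1-(n+1-a) = a; omega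
  · intro a ha; rw [Finset.mem_range] at ha; show n+1-(n+1-a) = a; omega
  · intro a ha
    rw [Finset.mem_Icc] at ha
    have h1 : ((n+1-a : ℕ):ℝ) = (n:ℝ)+1-(a:ℝ) := by
      rw [Nat.cast_sub (by omega : a ≤ n+1)]; push_cast; ring
    rw [show (a:ℝ) - n - 1 = -(((n+1-a : ℕ)):ℝ) by rw [h1]; ring,
      show n+1-(n+1-a) = a by omega]

/-- for `x > 0` and `n ≥ 0`,
`∫_0^∞ zⁿ e^{-xz} ln(1+z) dz = n! eˣ ∑_{ℓ=1}^{n+1} Γ(ℓ-n-1, x) / x^ℓ`. -/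
theorem stmt_17 (x : ℝ) (hx : 0 < x) (n : ℕ) :
    (∫ z in Set.Ioi (0 : ℝ), z ^ n * Real.exp (-x * z) * Real.log (1 + z)) =
      (Nat.factorial n : ℝ) * Real.exp x *
        ∑ ℓ ∈ Finset.Icc 1 (n + 1), upperIncGamma ((ℓ : ℝ) - n - 1) x / x ^ ℓ := by
  have h := I_eq_S hx n
  unfold Ii Ss at h
  rw [reindex]
  exact h
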